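/- Let N ∈ ℂ^{d×d} be upper Hessenberg and let z ∈ ℂ be such that zI − N is invertible. Then e_d^T (zI − N)^{-1} e₁ = (∏_{j=1}^{d−1} N_{j+1,j}) / det(zI − N). -/

import Mathlib

open Matrix

/-- For an upper Hessenberg matrix `N` and `z` such that `zI - N` is invertible,
the bottom-left entry of the resolvent satisfies
`e_dᵀ (zI - N)⁻¹ e₁ = (∏_j N_{j+1,j}) / det(zI - N)`.
(The paper's `d` is written as `d+1`.) -/
theorem hessenberg_resolvent_corner_entry
    {d : ℕ}
    (N : Matrix (Fin (d + 1)) (Fin (d + 1)) ℂ)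
    (hHess : ∀ i j : Fin (d + 1), (j : ℕ) + 1 < (i : ℕ) → N i j = 0)
    (z : ℂ)
    (hz : (z • (1 : Matrix (Fin (d + 1)) (Fin (d + 1)) ℂ) - N).det ≠ 0) :
    (z • (1 : Matrix (Fin (d + 1)) (Fin (d + 1)) ℂ) - N)⁻¹ (Fin.last d) 0 =
      (∏ j : Fin d, N j.succ j.castSucc) /
        (z • (1 : Matrix (Fin (d + 1)) (Fin (d + 1)) ℂ) - N).det := by
  set A := z • (1 : Matrix (Fin (d + 1)) (Fin (d + 1)) ℂ) - N with hA
  set B := A.updateRow 0 (Pi.single (Fin.last d) 1) with hB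
  have htri : (B.submatrix (finRotate (d + 1)) id).BlockTriangular id := by
    intro i j hij
    simp only [submatrix_apply, id_eq]
    rcases eq_or_ne i (Fin.last d) with rfl | hi
    · have h0 : finRotate (d + 1) (Fin.last d) = 0 := by
        apply Fin.ext
        simp [finRotate_succ_apply, Fin.last_add_one]
      rw [h0, hB, updateRow_apply, if_pos rfl, Pi.single_apply]
      exact if_neg (Fin.lt_last_iff_ne_last.1 hij)
    · have hij' : (j : ℕ) < (i : ℕ) := hij
      have hval : ((finRotate (d + 1) i : Fin (d+1)) : ℕ) = (i : ℕ) + 1 := by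
        rw [finRotate_succ_apply, Fin.val_add_one_of_lt (Fin.lt_last_iff_ne_last.2 hi)]
      have h0 : finRotate (d + 1) i ≠ 0 := by
        intro h; rw [h] at hval; simp at hval
      rw [hB, updateRow_apply, if_neg h0]
      have hN : N (finRotate (d + 1) i) j = 0 := by
        apply hHess; rw [hval]; omega
      have h1 : (1 : Matrix (Fin (d + 1)) (Fin (d + 1)) ℂ) (finRotate (d + 1) i) j = 0 := by
        rw [one_apply_ne]
        intro h; rw [h] at hval; omega
      simp only [finRotate_succ_apply] at hN h1 ⊢
      simp only [hA, Matrix.sub_apply, Matrix.smul_apply, smul_eq_mul, hN, sub_zero]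
      have hv : ((i + 1 : Fin (d + 1)) : ℕ) = (i : ℕ) + 1 :=
        Fin.val_add_one_of_lt (Fin.lt_last_iff_ne_last.2 hi)
      rw [one_apply_ne, mul_zero]
      intro h; rw [h] at hv; omega
  have hrot : ∀ j : Fin d, finRotate (d + 1) j.castSucc = j.succ := by
    intro j
    apply Fin.ext
    simp [finRotate_succ_apply, Fin.val_add_one_of_lt (Fin.castSucc_lt_last j)]
  have hdetC : (B.submatrix (finRotate (d + 1)) id).det
      = (-1 : ℂ) ^ d * ∏ j : Fin d, N j.succ j.castSucc := by
    rw [det_of_upperTriangular htri]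
    rw [Fin.prod_univ_castSucc]
    have hlast : B.submatrix (finRotate (d + 1)) id (Fin.last d) (Fin.last d) = 1 := by
      have h0 : finRotate (d + 1) (Fin.last d) = 0 := by
        apply Fin.ext
        simp [finRotate_succ_apply, Fin.last_add_one]
      simp [hB, h0, Pi.single_apply]
    rw [hlast, mul_one]
    have hdiag : ∀ j : Fin d, B.submatrix (finRotate (d + 1)) id j.castSucc j.castSucc
        = - N j.succ j.castSucc := by
      intro j
      have hne : (j.succ : Fin (d+1)) ≠ 0 := Fin.succ_ne_zero j
      have h1 : (1 : Matrix (Fin (d + 1)) (Fin (d + 1)) ℂ) j.succ j.castSucc = 0 := by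
        rw [one_apply_ne]
        exact (Fin.castSucc_lt_succ : j.castSucc < j.succ).ne'
      simp [hB, hrot j, updateRow_apply, hne, hA, h1]
    rw [Finset.prod_congr rfl
      fun j _ => (hdiag j).trans (neg_one_mul (N j.succ j.castSucc)).symm,
      Finset.prod_mul_distrib, Finset.prod_const, Finset.card_univ, Fintype.card_fin]
  have hdetB : B.det = ∏ j : Fin d, N j.succ j.castSucc := by
    have hp := det_permute (finRotate (d + 1)) B
    rw [hdetC, sign_finRotate] at hp
    have h2 : ((((-1:ℤˣ) ^ (d + 1 - 1) : ℤˣ) : ℤ) : ℂ) = (-1 : ℂ) ^ d := by rw [Nat.add_sub_cancel]; push_cast; ring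
    rw [h2] at hp
    exact mul_left_cancel₀ (pow_ne_zero d (by norm_num : (-1:ℂ) ≠ 0)) hp.symm
  have hadj : A.adjugate (Fin.last d) 0 = ∏ j : Fin d, N j.succ j.castSucc := by
    rw [adjugate_apply]; exact hdetB
  rw [inv_def, Matrix.smul_apply, hadj, Ring.inverse_eq_inv, smul_eq_mul, div_eq_inv_mul]
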